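/- Let Ω₁, Ω₂ ⊆ ℝ^n × ℝ^m be locally closed at (∞, ȳ) for some ȳ ∈ ℝ^m, and assume the transversality condition N_{Ω₁}(∞, ȳ) ∩ (−N_{Ω₂}(∞, ȳ)) = {0}. Then Ω₁ ∩ Ω₂ is locally closed at (∞, ȳ), and N_{Ω₁ ∩ Ω₂}(∞, ȳ) ⊆ N_{Ω₁}(∞, ȳ) + N_{Ω₂}(∞, ȳ). -/

import Mathlib

open Filter Topology Set Metric Pointwise
open scoped RealInnerProductSpace ENNReal

noncomputable section

variable {E F G : Type*}
  [NormedAddCommGroup E] [InnerProductSpace ℝ E]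
  [NormedAddCommGroup F] [InnerProductSpace ℝ F]
  [NormedAddCommGroup G] [InnerProductSpace ℝ G]

/-- The regular (Fréchet) normal cone to a subset of a product of inner product
spaces, at a point `p` (empty if `p ∉ Ω`). -/
def frechetNormalCone2 (Ω : Set (E × F)) (p : E × F) : Set (E × F) :=
  {ξ | p ∈ Ω ∧ ∀ ε > (0:ℝ), ∀ᶠ q in nhdsWithin p Ω,
      ⟪ξ.1, q.1 - p.1⟫ + ⟪ξ.2, q.2 - p.2⟫ ≤ ε * ‖q - p‖}

/-- The limiting (Mordukhovich) normal cone. -/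
def limitingNormalCone2 (Ω : Set (E × F)) (p : E × F) : Set (E × F) :=
  {ξ | ∃ pk : ℕ → E × F, ∃ ξk : ℕ → E × F,
    (∀ k, pk k ∈ Ω) ∧ Tendsto pk atTop (𝓝 p) ∧
    (∀ k, ξk k ∈ frechetNormalCone2 Ω (pk k)) ∧ Tendsto ξk atTop (𝓝 ξ)}

/-- The normal cone to `Ω ⊆ E × F` at `(∞, ȳ)`. -/
def normalConeAtInfty (Ω : Set (E × F)) (ybar : F) : Set (E × F) :=
  {ξ | ∃ pk : ℕ → E × F, ∃ ξk : ℕ → E × F,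
    (∀ k, pk k ∈ Ω) ∧ Tendsto (fun k => ‖(pk k).1‖) atTop atTop ∧
    Tendsto (fun k => (pk k).2) atTop (𝓝 ybar) ∧
    (∀ k, ξk k ∈ frechetNormalCone2 Ω (pk k)) ∧ Tendsto ξk atTop (𝓝 ξ)}

/-- `Ω ⊆ E × F` is locally closed at `(∞, ȳ)`. -/
def LocallyClosedAtInfty (Ω : Set (E × F)) (ybar : F) : Prop :=
  ∃ R > (0:ℝ), ∃ V ∈ 𝓝 ybar, IsClosed V ∧
    IsClosed (Ω ∩ {p : E × F | R ≤ ‖p.1‖ ∧ p.2 ∈ V})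

/-- Graph of a set-valued mapping. -/
def svGraph (S : E → Set F) : Set (E × F) := {p | p.2 ∈ S p.1}

/-- Jelonek set of a set-valued mapping. -/
def jelonek (S : E → Set F) : Set F :=
  {y | ∃ xk : ℕ → E, ∃ yk : ℕ → F,
    Tendsto (fun k => ‖xk k‖) atTop atTop ∧ (∀ k, yk k ∈ S (xk k)) ∧
    Tendsto yk atTop (𝓝 y)}

/-- Coderivative of a set-valued mapping at a point of its graph. -/
def coderiv (S : E → Set F) (x : E) (y : F) (v : F) : Set E :=
  {u | (u, -v) ∈ limitingNormalCone2 (svGraph S) (x, y)}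

/-- Coderivative of a set-valued mapping at `(∞, ȳ)`. -/
def coderivAtInfty (S : E → Set F) (ybar : F) (v : F) : Set E :=
  {u | (u, -v) ∈ normalConeAtInfty (svGraph S) ybar}

/-- Regular normal cone, one-space version. -/
def frechetNormalCone1 (Ω : Set E) (x : E) : Set E :=
  {ξ | x ∈ Ω ∧ ∀ ε > (0:ℝ), ∀ᶠ x' in nhdsWithin x Ω, ⟪ξ, x' - x⟫ ≤ ε * ‖x' - x‖}

/-- Normal cone at infinity to an unbounded subset of `E`. -/
def normalConeAtInfty1 (Ω : Set E) : Set E :=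
  {ξ | ∃ xk : ℕ → E, ∃ ξk : ℕ → E, (∀ k, xk k ∈ Ω) ∧
    Tendsto (fun k => ‖xk k‖) atTop atTop ∧
    (∀ k, ξk k ∈ frechetNormalCone1 Ω (xk k)) ∧ Tendsto ξk atTop (𝓝 ξ)}

/-- Epigraph of an extended-real-valued function. -/
def epiSet (f : E → EReal) : Set (E × ℝ) := {p | f p.1 ≤ (p.2 : EReal)}

/-- Graph of an extended-real-valued function, as a subset of `E × ℝ`. -/
def gphFun (f : E → EReal) : Set (E × ℝ) := {p | f p.1 = (p.2 : EReal)}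

/-- Jelonek set of a function. -/
def jelonekFun (f : E → EReal) : Set ℝ :=
  {y | ∃ xk : ℕ → E, Tendsto (fun k => ‖xk k‖) atTop atTop ∧
    Tendsto (fun k => f (xk k)) atTop (𝓝 (y : EReal))}

/-- Limiting subdifferential of `f` at `x` (empty outside `dom f`). -/
def limSubdiff (f : E → EReal) (x : E) : Set E :=
  {u | ∃ r : ℝ, f x = (r : EReal) ∧
    (u, (-1 : ℝ)) ∈ limitingNormalCone2 (epiSet f) (x, r)}

/-- Limiting subdifferential of `f` at `(∞, ȳ)`. -/
def limSubdiffAtInfty (f : E → EReal) (ybar : ℝ) : Set E :=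
  {u | (u, (-1 : ℝ)) ∈ normalConeAtInfty (epiSet f) ybar}

/-- Singular subdifferential of `f` at `(∞, ȳ)`. -/
def singSubdiffAtInfty (f : E → EReal) (ybar : ℝ) : Set E :=
  {u | (u, (0 : ℝ)) ∈ normalConeAtInfty (epiSet f) ybar}

/-- Inverse of a set-valued mapping. -/
def svInv (S : E → Set F) (y : F) : Set E := {x | y ∈ S x}

/-- Preimage `F⁻¹(V) = {x : F(x) ∩ V ≠ ∅}`. -/
def svPreimage (S : E → Set F) (V : Set F) : Set E := {x | (S x ∩ V).Nonempty}

/-- Distance function of a set-valued mapping, with value `+∞` on empty values. -/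
def dSV (S : E → Set F) (p : E × F) : EReal :=
  ((EMetric.infEdist p.2 (S p.1) : ℝ≥0∞) : EReal)

/-- Regular normal cone on `(E × F) × ℝ`. -/
def frechetNormalCone3 (Ω : Set ((E × F) × ℝ)) (p : (E × F) × ℝ) : Set ((E × F) × ℝ) :=
  {ξ | p ∈ Ω ∧ ∀ ε > (0:ℝ), ∀ᶠ q in nhdsWithin p Ω,
      ⟪ξ.1.1, q.1.1 - p.1.1⟫ + ⟪ξ.1.2, q.1.2 - p.1.2⟫ + ξ.2 * (q.2 - p.2)
        ≤ ε * ‖q - p‖}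

/-- Limiting normal cone on `(E × F) × ℝ`. -/
def limitingNormalCone3 (Ω : Set ((E × F) × ℝ)) (p : (E × F) × ℝ) : Set ((E × F) × ℝ) :=
  {ξ | ∃ pk ξk : ℕ → (E × F) × ℝ, (∀ k, pk k ∈ Ω) ∧ Tendsto pk atTop (𝓝 p) ∧
    (∀ k, ξk k ∈ frechetNormalCone3 Ω (pk k)) ∧ Tendsto ξk atTop (𝓝 ξ)}

/-- Limiting subdifferential of the distance function `d_F`. -/
def limSubdiffD (S : E → Set F) (p : E × F) : Set (E × F) :=
  {w | ∃ r : ℝ, dSV S p = (r : EReal) ∧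
    (w, (-1 : ℝ)) ∈ limitingNormalCone3 {q : (E × F) × ℝ | dSV S q.1 ≤ (q.2 : EReal)} (p, r)}

/-- The set `J⁺(F₁ + F₂, y)`. -/
def jplus (S₁ S₂ : E → Set F) (y : F) : Set (F × F) :=
  {q | ∃ xk : ℕ → E, ∃ y1k y2k : ℕ → F,
    Tendsto (fun k => ‖xk k‖) atTop atTop ∧
    (∀ k, y1k k ∈ S₁ (xk k)) ∧ (∀ k, y2k k ∈ S₂ (xk k)) ∧
    Tendsto y1k atTop (𝓝 q.1) ∧ Tendsto y2k atTop (𝓝 q.2) ∧ q.1 + q.2 = y}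

/-- The set `J°(F₂ ∘ F₁, y)`. -/
def jcirc (S₁ : E → Set G) (S₂ : G → Set F) (y : F) : Set G :=
  {z | ∃ xk : ℕ → E, ∃ zk : ℕ → G, ∃ yk : ℕ → F,
    Tendsto (fun k => ‖xk k‖) atTop atTop ∧ (∀ k, zk k ∈ S₁ (xk k)) ∧
    (∀ k, yk k ∈ S₂ (zk k)) ∧ Tendsto zk atTop (𝓝 z) ∧ Tendsto yk atTop (𝓝 y)}

/-- Composition `F₂ ∘ F₁` of set-valued mappings. -/
def svComp (S₂ : G → Set F) (S₁ : E → Set G) (x : E) : Set F :=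
  {y | ∃ z ∈ S₁ x, y ∈ S₂ z}

abbrev Eucl (n : ℕ) := EuclideanSpace ℝ (Fin n)

section Stmt1Aux
set_option linter.unusedSectionVars false
set_option linter.unusedVariables false
namespace Stmt1Aux


def pr2 (ξ q : E × F) : ℝ := ⟪ξ.1, q.1⟫ + ⟪ξ.2, q.2⟫
def Qf2 (q : E × F) : ℝ := ‖q.1‖ ^ 2 + ‖q.2‖ ^ 2
lemma pr2_eq (ξ q p : E × F) : ⟪ξ.1, q.1 - p.1⟫ + ⟪ξ.2, q.2 - p.2⟫ = pr2 ξ (q - p) := rfl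
lemma pr2_sub_right (ξ a b : E × F) : pr2 ξ (a - b) = pr2 ξ a - pr2 ξ b := by
  simp [pr2, inner_sub_right]; ring
lemma pr2_sub_left (a b w : E × F) : pr2 (a - b) w = pr2 a w - pr2 b w := by
  simp [pr2, inner_sub_left]; ring
lemma pr2_smul_left (t : ℝ) (ξ w : E × F) : pr2 (t • ξ) w = t * pr2 ξ w := by
  simp [pr2, real_inner_smul_left]; ring
lemma pr2_zero_left (w : E × F) : pr2 (0 : E × F) w = 0 := by simp [pr2]
lemma pr2_le (ξ w : E × F) : pr2 ξ w ≤ 2 * ‖ξ‖ * ‖w‖ := by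
  have h1 := real_inner_le_norm ξ.1 w.1
  have h2 := real_inner_le_norm ξ.2 w.2
  have := norm_fst_le ξ; have := norm_snd_le ξ
  have := norm_fst_le w; have := norm_snd_le w
  have hξ := norm_nonneg ξ; have hw := norm_nonneg w
  unfold pr2
  nlinarith [norm_nonneg ξ.1, norm_nonneg w.1, norm_nonneg ξ.2, norm_nonneg w.2]
lemma Qf2_nonneg (w : E × F) : 0 ≤ Qf2 w := by unfold Qf2; positivity
lemma norm_sq_le_Qf2 (w : E × F) : ‖w‖ ^ 2 ≤ Qf2 w := by
  rw [Prod.norm_def]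
  rcases le_total ‖w.1‖ ‖w.2‖ with h | h
  · rw [sup_eq_right.2 h]; unfold Qf2; nlinarith [norm_nonneg w.1]
  · rw [sup_eq_left.2 h]; unfold Qf2; nlinarith [norm_nonneg w.2]
lemma Qf2_le (w : E × F) : Qf2 w ≤ 2 * ‖w‖ ^ 2 := by
  have h1 := norm_fst_le w; have h2 := norm_snd_le w
  unfold Qf2; nlinarith [norm_nonneg w.1, norm_nonneg w.2, norm_nonneg w]
lemma Qf2_expand (u c x₀ : E × F) :
    Qf2 (u - c) = Qf2 (u - x₀) + 2 * pr2 (x₀ - c) (u - x₀) + Qf2 (x₀ - c) := by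
  have h1 : ‖u.1 - c.1‖ ^ 2 = ‖u.1 - x₀.1‖ ^ 2 + 2 * ⟪u.1 - x₀.1, x₀.1 - c.1⟫ + ‖x₀.1 - c.1‖ ^ 2 := by
    rw [show u.1 - c.1 = (u.1 - x₀.1) + (x₀.1 - c.1) by abel]; exact norm_add_sq_real _ _
  have h2 : ‖u.2 - c.2‖ ^ 2 = ‖u.2 - x₀.2‖ ^ 2 + 2 * ⟪u.2 - x₀.2, x₀.2 - c.2⟫ + ‖x₀.2 - c.2‖ ^ 2 := by
    rw [show u.2 - c.2 = (u.2 - x₀.2) + (x₀.2 - c.2) by abel]; exact norm_add_sq_real _ _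
  unfold Qf2 pr2
  simp only [Prod.fst_sub, Prod.snd_sub] at *
  rw [h1, h2, real_inner_comm (x₀.1 - c.1), real_inner_comm (x₀.2 - c.2)]
  ring
lemma Qf2_sub_comm (a b : E × F) : Qf2 (a - b) = Qf2 (b - a) := by
  unfold Qf2; simp only [Prod.fst_sub, Prod.snd_sub]
  rw [norm_sub_rev a.1, norm_sub_rev a.2]
lemma continuous_pr2 (ξ : E × F) : Continuous (pr2 ξ : E × F → ℝ) := by
  unfold pr2
  exact ((continuous_const.inner continuous_fst)).add ((continuous_const.inner continuous_snd))
lemma continuous_Qf2 : Continuous (Qf2 : E × F → ℝ) := by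
  unfold Qf2
  exact ((continuous_fst.norm.pow 2)).add ((continuous_snd.norm.pow 2))
lemma frechet_smul {Ω : Set (E × F)} {p ξ : E × F} {t : ℝ}
    (ht : 0 < t) (hξ : ξ ∈ frechetNormalCone2 Ω p) :
    t • ξ ∈ frechetNormalCone2 Ω p := by
  refine ⟨hξ.1, fun ε hε => ?_⟩
  filter_upwards [hξ.2 (ε / t) (div_pos hε ht)] with q hq
  have h1 : (t • ξ).1 = t • ξ.1 := rfl
  have h2 : (t • ξ).2 = t • ξ.2 := rfl
  rw [h1, h2, real_inner_smul_left, real_inner_smul_left]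
  calc t * ⟪ξ.1, q.1 - p.1⟫ + t * ⟪ξ.2, q.2 - p.2⟫
      = t * (⟪ξ.1, q.1 - p.1⟫ + ⟪ξ.2, q.2 - p.2⟫) := by ring
    _ ≤ t * (ε / t * ‖q - p‖) := mul_le_mul_of_nonneg_left hq ht.le
    _ = ε * ‖q - p‖ := by field_simp
lemma eventually_nhdsWithin_metric {X : Type*} [PseudoMetricSpace X]
    {s : Set X} {a : X} {r : ℝ} (hr : 0 < r) :
    ∀ᶠ x in nhdsWithin a s, x ∈ s ∧ dist x a < r := by
  filter_upwards [self_mem_nhdsWithin,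
    (Metric.eventually_nhds_iff.2 ⟨r, hr, fun {x} h => h⟩ : ∀ᶠ x in 𝓝 a, dist x a < r).filter_mono
      nhdsWithin_le_nhds] with x h1 h2
  exact ⟨h1, h2⟩

lemma mem_frechet_of_min (Ω : Set (E × F)) (x₀ ζ c d : E × F) (a b ρ : ℝ)
    (ha : 0 ≤ a) (hb : 0 ≤ b) (hρ : 0 < ρ) (hx₀ : x₀ ∈ Ω)
    (hmin : ∀ u ∈ Ω, ‖u - x₀‖ < ρ →
      -pr2 ζ x₀ + a * Qf2 (x₀ - c) + b * Qf2 (x₀ - d) ≤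
      -pr2 ζ u + a * Qf2 (u - c) + b * Qf2 (u - d)) :
    (ζ - (2 * a) • (x₀ - c) - (2 * b) • (x₀ - d)) ∈ frechetNormalCone2 Ω x₀ := by
  refine ⟨hx₀, fun ε hε => ?_⟩
  have hr' : 0 < min ρ (ε / (2 * (a + b) + 1)) := by
    apply lt_min hρ; positivity
  filter_upwards [eventually_nhdsWithin_metric hr' (s := Ω) (a := x₀)] with q hq
  obtain ⟨hqΩ, hqd⟩ := hq
  rw [dist_eq_norm] at hqd
  have hd1 : ‖q - x₀‖ < ρ := lt_of_lt_of_le hqd (min_le_left _ _)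
  have hd2 : ‖q - x₀‖ < ε / (2 * (a + b) + 1) := lt_of_lt_of_le hqd (min_le_right _ _)
  have h1 := hmin q hqΩ hd1
  have e1 := Qf2_expand q c x₀
  have e2 := Qf2_expand q d x₀
  have e3 : pr2 (ζ - (2 * a) • (x₀ - c) - (2 * b) • (x₀ - d)) (q - x₀)
      = pr2 ζ (q - x₀) - 2 * a * pr2 (x₀ - c) (q - x₀) - 2 * b * pr2 (x₀ - d) (q - x₀) := by
    rw [pr2_sub_left, pr2_sub_left, pr2_smul_left, pr2_smul_left]
  have e4 := pr2_sub_right ζ q x₀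
  have h5 : Qf2 (q - x₀) ≤ 2 * ‖q - x₀‖ ^ 2 := Qf2_le _
  have hn : (0:ℝ) ≤ ‖q - x₀‖ := norm_nonneg _
  rw [pr2_eq, e3]
  have key : 2 * (a + b) * ‖q - x₀‖ ^ 2 ≤ ε * ‖q - x₀‖ := by
    have h6 : ‖q - x₀‖ * (2 * (a + b) + 1) ≤ ε := by
      rw [← le_div_iff₀ (by positivity)]; exact hd2.le
    nlinarith [mul_le_mul_of_nonneg_left h6 hn]
  nlinarith [Qf2_nonneg (q - x₀)]

lemma fuzzy [FiniteDimensional ℝ E] [FiniteDimensional ℝ F]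
    (Ω₁ Ω₂ : Set (E × F)) (xb ξ : E × F) (r ε : ℝ)
    (hr : 0 < r) (hε : 0 < ε)
    (hc1 : IsClosed (Ω₁ ∩ closedBall xb r)) (hc2 : IsClosed (Ω₂ ∩ closedBall xb r))
    (hξ : ξ ∈ frechetNormalCone2 (Ω₁ ∩ Ω₂) xb) :
    ∃ x₁ x₂ ξ₁ ξ₂ : E × F, ‖x₁ - xb‖ ≤ ε ∧ ‖x₂ - xb‖ ≤ ε ∧
      ξ₁ ∈ frechetNormalCone2 Ω₁ x₁ ∧ ξ₂ ∈ frechetNormalCone2 Ω₂ x₂ ∧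
      ‖ξ - ξ₁ - ξ₂‖ ≤ ε := by
  classical
  -- unpack the Fréchet property with tolerance ε/4
  have hev := hξ.2 (ε / 4) (by positivity)
  rw [eventually_nhdsWithin_iff, Metric.eventually_nhds_iff] at hev
  obtain ⟨δ₀, hδ₀, hball⟩ := hev
  have hfre : ∀ u ∈ Ω₁ ∩ Ω₂, ‖u - xb‖ < δ₀ → pr2 ξ (u - xb) ≤ (ε / 4) * ‖u - xb‖ := by
    intro u hu hd
    have := hball (by rwa [dist_eq_norm]) hu
    rwa [pr2_eq] at this
  set δ : ℝ := min (min ε r) (δ₀ / 2) with hδdef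
  have hδpos : 0 < δ := lt_min (lt_min hε hr) (by positivity)
  have hδε : δ ≤ ε := le_trans (min_le_left _ _) (min_le_left _ _)
  have hδr : δ ≤ r := le_trans (min_le_left _ _) (min_le_right _ _)
  have hδδ₀ : δ < δ₀ := lt_of_le_of_lt (min_le_right _ _) (by linarith)
  set M : ℝ := max 1 (ε / δ) with hMdef
  have hM1 : (1:ℝ) ≤ M := le_max_left _ _
  have hMpos : 0 < M := lt_of_lt_of_le one_pos hM1
  have hMεδ : ε / δ ≤ M := le_max_right _ _
  have hM3 : ε / (3 * M) ≤ δ / 3 := by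
    rw [div_le_div_iff₀ (by positivity) (by norm_num)]
    have := (div_le_iff₀ hδpos).1 hMεδ
    nlinarith
  clear hδdef hMdef
  clear_value δ M
  -- the compact constraint set
  set C : Set ((E × F) × (E × F)) :=
    (Ω₁ ∩ closedBall xb δ) ×ˢ (Ω₂ ∩ closedBall xb δ) with hCdef
  have hxbΩ : xb ∈ Ω₁ ∩ Ω₂ := hξ.1
  have hCne : (xb, xb) ∈ C :=
    ⟨⟨hxbΩ.1, mem_closedBall_self hδpos.le⟩, ⟨hxbΩ.2, mem_closedBall_self hδpos.le⟩⟩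
  have hc1' : IsClosed (Ω₁ ∩ closedBall xb δ) := by
    have : Ω₁ ∩ closedBall xb δ = (Ω₁ ∩ closedBall xb r) ∩ closedBall xb δ := by
      ext q; constructor
      · rintro ⟨h1, h2⟩; exact ⟨⟨h1, le_trans h2 hδr⟩, h2⟩
      · rintro ⟨⟨h1, _⟩, h2⟩; exact ⟨h1, h2⟩
    rw [this]; exact hc1.inter isClosed_closedBall
  have hc2' : IsClosed (Ω₂ ∩ closedBall xb δ) := by
    have : Ω₂ ∩ closedBall xb δ = (Ω₂ ∩ closedBall xb r) ∩ closedBall xb δ := by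
      ext q; constructor
      · rintro ⟨h1, h2⟩; exact ⟨⟨h1, le_trans h2 hδr⟩, h2⟩
      · rintro ⟨⟨h1, _⟩, h2⟩; exact ⟨h1, h2⟩
    rw [this]; exact hc2.inter isClosed_closedBall
  have hCcomp : IsCompact C := by
    refine IsCompact.of_isClosed_subset
      ((isCompact_closedBall xb δ).prod (isCompact_closedBall xb δ))
      (hc1'.prod hc2') (Set.prod_mono inter_subset_right inter_subset_right)
  -- the penalized objective and its minimizers
  set φ : ℕ → (E × F) × (E × F) → ℝ :=
    fun k q => -pr2 ξ q.1 + M * Qf2 (q.1 - xb) + (k + 1 : ℝ) * Qf2 (q.1 - q.2) with hφdef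
  have hφcont : ∀ k, Continuous (φ k) := by
    intro k
    apply Continuous.add
    apply Continuous.add
    · exact ((continuous_pr2 ξ).comp continuous_fst).neg
    · exact continuous_const.mul (continuous_Qf2.comp ((continuous_fst).sub continuous_const))
    · exact continuous_const.mul (continuous_Qf2.comp ((continuous_fst).sub continuous_snd))
  have hmin : ∀ k : ℕ, ∃ p ∈ C, ∀ q ∈ C, φ k p ≤ φ k q := by
    intro k
    obtain ⟨p, hp, hmin⟩ := hCcomp.exists_isMinOn ⟨(xb, xb), hCne⟩ (hφcont k).continuousOn
    exact ⟨p, hp, fun q hq => hmin hq⟩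
  choose p hpC hpmin using hmin
  set u : ℕ → E × F := fun k => (p k).1 with hudef
  set v : ℕ → E × F := fun k => (p k).2 with hvdef
  have huΩ : ∀ k, u k ∈ Ω₁ ∧ ‖u k - xb‖ ≤ δ := fun k =>
    ⟨(hpC k).1.1, by have := (hpC k).1.2; rwa [mem_closedBall, dist_eq_norm] at this⟩
  have hvΩ : ∀ k, v k ∈ Ω₂ ∧ ‖v k - xb‖ ≤ δ := fun k =>
    ⟨(hpC k).2.1, by have := (hpC k).2.2; rwa [mem_closedBall, dist_eq_norm] at this⟩
  have hkey : ∀ k : ℕ, M * Qf2 (u k - xb) + ((k : ℝ) + 1) * Qf2 (u k - v k) ≤ pr2 ξ (u k - xb) := by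
    intro k
    have h := hpmin k (xb, xb) hCne
    have e0 : Qf2 (xb - xb) = 0 := by rw [sub_self]; simp [Qf2]
    have := pr2_sub_right ξ (u k) xb
    simp only [hφdef] at h
    rw [e0] at h
    have hu' : (p k).1 = u k := rfl
    have hv' : (p k).2 = v k := rfl
    rw [hu', hv'] at h
    linarith
  have hkey2 : ∀ k : ℕ, ((k : ℝ) + 1) * Qf2 (u k - v k) ≤ 2 * ‖ξ‖ * δ := by
    intro k
    have h1 := hkey k
    have h2 : pr2 ξ (u k - xb) ≤ 2 * ‖ξ‖ * ‖u k - xb‖ := pr2_le _ _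
    have h3 : 2 * ‖ξ‖ * ‖u k - xb‖ ≤ 2 * ‖ξ‖ * δ :=
      mul_le_mul_of_nonneg_left (huΩ k).2 (by positivity)
    nlinarith [Qf2_nonneg (u k - xb), hMpos]
  have hQuv : Tendsto (fun k => Qf2 (u k - v k)) atTop (𝓝 0) := by
    apply squeeze_zero (fun k => Qf2_nonneg _) (g := fun k : ℕ => (2 * ‖ξ‖ * δ) * (1 / ((k:ℝ) + 1)))
    · intro k
      rw [mul_one_div, le_div_iff₀ (by positivity)]
      calc Qf2 (u k - v k) * ((k : ℝ) + 1) = ((k : ℝ) + 1) * Qf2 (u k - v k) := by ring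
        _ ≤ 2 * ‖ξ‖ * δ := hkey2 k
    · have := tendsto_one_div_add_atTop_nhds_zero_nat.const_mul (2 * ‖ξ‖ * δ)
      simpa using this
  have hnuv : Tendsto (fun k => ‖u k - v k‖) atTop (𝓝 0) := by
    have hsq : Tendsto (fun k => ‖u k - v k‖ ^ 2) atTop (𝓝 0) :=
      squeeze_zero (fun k => sq_nonneg _) (fun k => norm_sq_le_Qf2 _) hQuv
    have : Tendsto (fun k => Real.sqrt (‖u k - v k‖ ^ 2)) atTop (𝓝 (Real.sqrt 0)) :=
      (Real.continuous_sqrt.tendsto 0).comp hsq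
    rw [Real.sqrt_zero] at this
    convert this using 2 with k
    rw [Real.sqrt_sq (norm_nonneg _)]
  -- subsequence converging to a point of C
  obtain ⟨qs, hqsC, ψ, hψ, hψlim⟩ := hCcomp.tendsto_subseq hpC
  set us : E × F := qs.1 with husdef
  set vs : E × F := qs.2 with hvsdef
  have hulim : Tendsto (fun j => u (ψ j)) atTop (𝓝 us) :=
    (continuous_fst.tendsto qs).comp hψlim
  have hvlim : Tendsto (fun j => v (ψ j)) atTop (𝓝 vs) :=
    (continuous_snd.tendsto qs).comp hψlim
  have huvs : us = vs := by
    have h1 : Tendsto (fun j => u (ψ j) - v (ψ j)) atTop (𝓝 (us - vs)) := hulim.sub hvlim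
    have h2 : Tendsto (fun j => u (ψ j) - v (ψ j)) atTop (𝓝 0) := by
      apply squeeze_zero_norm (a := fun j => ‖u (ψ j) - v (ψ j)‖) (fun j => le_refl _)
      exact hnuv.comp hψ.tendsto_atTop
    have := tendsto_nhds_unique h1 h2
    exact sub_eq_zero.1 this
  have husmem : us ∈ Ω₁ ∩ Ω₂ := ⟨hqsC.1.1, huvs ▸ hqsC.2.1⟩
  have husδ : ‖us - xb‖ ≤ δ := by
    have := hqsC.1.2; rwa [mem_closedBall, dist_eq_norm] at this
  -- limit of the key inequality
  have hstar : M * Qf2 (us - xb) ≤ pr2 ξ (us - xb) := by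
    refine le_of_tendsto_of_tendsto'
      (((continuous_Qf2.tendsto (us - xb)).comp (hulim.sub_const xb)).const_mul M)
      (((continuous_pr2 ξ).tendsto (us - xb)).comp (hulim.sub_const xb))
      (fun j => ?_)
    have h1 := hkey (ψ j)
    have h2 : (0:ℝ) ≤ ((ψ j : ℝ) + 1) * Qf2 (u (ψ j) - v (ψ j)) := by
      apply mul_nonneg (by positivity) (Qf2_nonneg _)
    simp only [Function.comp]
    linarith
  have hfres : pr2 ξ (us - xb) ≤ (ε / 4) * ‖us - xb‖ :=
    hfre us husmem (lt_of_le_of_lt husδ hδδ₀)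
  have hussmall : ‖us - xb‖ ≤ ε / (4 * M) := by
    have h4M : (0:ℝ) < 4 * M := by linarith
    have ht : (0:ℝ) ≤ ‖us - xb‖ := norm_nonneg _
    have hMt : M * ‖us - xb‖ ^ 2 ≤ (ε / 4) * ‖us - xb‖ :=
      le_trans (le_trans (mul_le_mul_of_nonneg_left (norm_sq_le_Qf2 (us - xb)) hMpos.le) hstar)
        hfres
    rw [le_div_iff₀ h4M]
    rcases eq_or_lt_of_le ht with h | h
    · rw [← h]; simpa using hε.le
    · have h1 : (M * ‖us - xb‖) * ‖us - xb‖ ≤ (ε / 4) * ‖us - xb‖ := by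
        calc (M * ‖us - xb‖) * ‖us - xb‖ = M * ‖us - xb‖ ^ 2 := by ring
          _ ≤ (ε / 4) * ‖us - xb‖ := hMt
      have h2 : M * ‖us - xb‖ ≤ ε / 4 := le_of_mul_le_mul_right h1 h
      calc ‖us - xb‖ * (4 * M) = 4 * (M * ‖us - xb‖) := by ring
        _ ≤ 4 * (ε / 4) := by linarith
        _ = ε := by ring
  -- choose a good index
  have hev1 : ∀ᶠ j in atTop, ‖u (ψ j) - xb‖ < ε / (3 * M) := by
    have hlt : ‖us - xb‖ < ε / (3 * M) := by
      apply lt_of_le_of_lt hussmall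
      rw [div_lt_div_iff₀ (by linarith : (0:ℝ) < 4 * M) (by linarith : (0:ℝ) < 3 * M)]
      have hεM : 0 < ε * M := mul_pos hε hMpos
      calc ε * (3 * M) = 3 * (ε * M) := by ring
        _ < 4 * (ε * M) := by linarith
        _ = ε * (4 * M) := by ring
    have : Tendsto (fun j => ‖u (ψ j) - xb‖) atTop (𝓝 ‖us - xb‖) :=
      ((continuous_norm.tendsto (us - xb)).comp (hulim.sub_const xb))
    exact this.eventually_lt_const hlt
  have hev2 : ∀ᶠ j in atTop, ‖u (ψ j) - v (ψ j)‖ < δ / 2 :=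
    (hnuv.comp hψ.tendsto_atTop).eventually_lt_const (by linarith)
  obtain ⟨j, hj1, hj2⟩ := (hev1.and hev2).exists
  set K : ℕ := ψ j with hKdef
  set xu : E × F := u K with hxudef
  set xv : E × F := v K with hxvdef
  have hxuδ3 : ‖xu - xb‖ < δ / 3 := lt_of_lt_of_le hj1 hM3
  have hxvδ : ‖xv - xb‖ < δ := by
    calc ‖xv - xb‖ ≤ ‖xv - xu‖ + ‖xu - xb‖ := norm_sub_le_norm_sub_add_norm_sub _ _ _
      _ < δ / 2 + δ / 3 := by
          rw [norm_sub_rev]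
          exact add_lt_add hj2 hxuδ3
      _ ≤ δ := by linarith
  have hxuδ : ‖xu - xb‖ < δ := lt_of_lt_of_le hxuδ3 (by linarith)
  -- first-order conditions
  have hξ₁ : (ξ - (2 * M) • (xu - xb) - (2 * ((K:ℝ) + 1)) • (xu - xv))
      ∈ frechetNormalCone2 Ω₁ xu := by
    apply mem_frechet_of_min Ω₁ xu ξ xb xv M ((K:ℝ) + 1) (δ - ‖xu - xb‖) hMpos.le
      (by positivity) (by linarith) (huΩ K).1
    intro w hw hwd
    have hwC : (w, xv) ∈ C := by
      refine ⟨⟨hw, ?_⟩, (hpC K).2⟩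
      rw [mem_closedBall, dist_eq_norm]
      calc ‖w - xb‖ ≤ ‖w - xu‖ + ‖xu - xb‖ := norm_sub_le_norm_sub_add_norm_sub _ _ _
        _ ≤ δ := by linarith
    have h := hpmin K (w, xv) hwC
    simp only [hφdef] at h
    linarith
  have hξ₂' : ((0 : E × F) - (2 * ((K:ℝ) + 1)) • (xv - xu) - ((2:ℝ) * 0) • (xv - 0))
      ∈ frechetNormalCone2 Ω₂ xv := by
    apply mem_frechet_of_min Ω₂ xv 0 xu 0 ((K:ℝ) + 1) 0 (δ - ‖xv - xb‖)
      (by positivity) le_rfl (by linarith) (hvΩ K).1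
    intro w hw hwd
    have hwC : (xu, w) ∈ C := by
      refine ⟨(hpC K).1, ⟨hw, ?_⟩⟩
      rw [mem_closedBall, dist_eq_norm]
      calc ‖w - xb‖ ≤ ‖w - xv‖ + ‖xv - xb‖ := norm_sub_le_norm_sub_add_norm_sub _ _ _
        _ ≤ δ := by linarith
    have h := hpmin K (xu, w) hwC
    simp only [hφdef] at h
    rw [pr2_zero_left, pr2_zero_left, Qf2_sub_comm xv xu, Qf2_sub_comm w xu]
    linarith
  have hξ₂ : ((2 * ((K:ℝ) + 1)) • (xu - xv)) ∈ frechetNormalCone2 Ω₂ xv := by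
    have e : (0 : E × F) - (2 * ((K:ℝ) + 1)) • (xv - xu) - ((2:ℝ) * 0) • (xv - 0)
        = (2 * ((K:ℝ) + 1)) • (xu - xv) := by
      rw [mul_zero, zero_smul, sub_zero, zero_sub, ← smul_neg, neg_sub]
    rwa [e] at hξ₂'
  refine ⟨xu, xv, _, _, le_trans (huΩ K).2 hδε, le_trans hxvδ.le hδε, hξ₁, hξ₂, ?_⟩
  have e : ξ - (ξ - (2 * M) • (xu - xb) - (2 * ((K:ℝ) + 1)) • (xu - xv))
      - (2 * ((K:ℝ) + 1)) • (xu - xv) = (2 * M) • (xu - xb) := by abel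
  rw [e, norm_smul, Real.norm_eq_abs]
  have habs : |2 * M| = 2 * M := abs_of_pos (by linarith)
  rw [habs]
  have hMne : M ≠ 0 := ne_of_gt hMpos
  calc 2 * M * ‖xu - xb‖ ≤ 2 * M * (ε / (3 * M)) :=
        mul_le_mul_of_nonneg_left hj1.le (by linarith)
    _ = 2 * ε / 3 := by field_simp
    _ ≤ ε := by linarith

end Stmt1Aux
end Stmt1Aux
open Stmt1Aux

/-- Intersection rule for normal cones at infinity. -/
theorem stmt1 {n m : ℕ} (Ω₁ Ω₂ : Set (Eucl n × Eucl m)) (ybar : Eucl m)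
    (h₁ : LocallyClosedAtInfty Ω₁ ybar) (h₂ : LocallyClosedAtInfty Ω₂ ybar)
    (htrans : normalConeAtInfty Ω₁ ybar ∩ (-(normalConeAtInfty Ω₂ ybar)) = {0}) :
    LocallyClosedAtInfty (Ω₁ ∩ Ω₂) ybar ∧
      normalConeAtInfty (Ω₁ ∩ Ω₂) ybar ⊆
        normalConeAtInfty Ω₁ ybar + normalConeAtInfty Ω₂ ybar := by
  classical
  obtain ⟨R₁, hR₁, V₁, hV₁, hV₁c, hcl₁⟩ := h₁
  obtain ⟨R₂, hR₂, V₂, hV₂, hV₂c, hcl₂⟩ := h₂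
  constructor
  · refine ⟨max R₁ R₂, lt_max_of_lt_left hR₁, V₁ ∩ V₂, Filter.inter_mem hV₁ hV₂,
      hV₁c.inter hV₂c, ?_⟩
    have heq : (Ω₁ ∩ Ω₂) ∩ {p : Eucl n × Eucl m | max R₁ R₂ ≤ ‖p.1‖ ∧ p.2 ∈ V₁ ∩ V₂}
        = ((Ω₁ ∩ {p | R₁ ≤ ‖p.1‖ ∧ p.2 ∈ V₁}) ∩ (Ω₂ ∩ {p | R₂ ≤ ‖p.1‖ ∧ p.2 ∈ V₂}))
          ∩ ({p : Eucl n × Eucl m | max R₁ R₂ ≤ ‖p.1‖} ∩ (Prod.snd ⁻¹' (V₁ ∩ V₂))) := by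
      ext q
      simp only [Set.mem_inter_iff, Set.mem_setOf_eq, Set.mem_preimage]
      constructor
      · rintro ⟨⟨hq1, hq2⟩, hR, hV⟩
        exact ⟨⟨⟨hq1, le_trans (le_max_left _ _) hR, hV.1⟩,
          ⟨hq2, le_trans (le_max_right _ _) hR, hV.2⟩⟩, hR, hV⟩
      · rintro ⟨⟨⟨hq1, _⟩, ⟨hq2, _⟩⟩, hR, hV⟩
        exact ⟨⟨hq1, hq2⟩, hR, hV⟩
    rw [heq]
    refine (hcl₁.inter hcl₂).inter (IsClosed.inter ?_ ?_)
    · exact isClosed_le continuous_const continuous_fst.norm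
    · exact (hV₁c.inter hV₂c).preimage continuous_snd
  · rintro ξ ⟨pk, ξk, hpkΩ, hpk1, hpk2, hξkF, hξklim⟩
    -- find a closed ball inside V₁ ∩ V₂
    obtain ⟨r0, hr0, hr0sub⟩ := Metric.mem_nhds_iff.1 (Filter.inter_mem hV₁ hV₂)
    set r : ℝ := r0 / 2 with hrdef
    have hr : 0 < r := by positivity
    have hrsub : closedBall ybar r ⊆ V₁ ∩ V₂ :=
      subset_trans (closedBall_subset_ball (by simp [hrdef]; linarith)) hr0sub
    -- eventual conditions
    have hev1 : ∀ᶠ k in atTop, max R₁ R₂ + r ≤ ‖(pk k).1‖ := hpk1.eventually_ge_atTop _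
    have hev2 : ∀ᶠ k in atTop, dist ((pk k).2) ybar < r / 2 :=
      Metric.tendsto_nhds.1 hpk2 (r / 2) (by linarith)
    obtain ⟨N, hN⟩ := eventually_atTop.1 (hev1.and hev2)
    -- apply the fuzzy intersection rule at each shifted index
    have key : ∀ j : ℕ, ∃ x₁ x₂ ξ₁ ξ₂ : Eucl n × Eucl m,
        ‖x₁ - pk (j + N)‖ ≤ min (r / 2) (1 / ((j:ℝ) + 1)) ∧
        ‖x₂ - pk (j + N)‖ ≤ min (r / 2) (1 / ((j:ℝ) + 1)) ∧
        ξ₁ ∈ frechetNormalCone2 Ω₁ x₁ ∧ ξ₂ ∈ frechetNormalCone2 Ω₂ x₂ ∧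
        ‖ξk (j + N) - ξ₁ - ξ₂‖ ≤ min (r / 2) (1 / ((j:ℝ) + 1)) := by
      intro j
      obtain ⟨hq1, hq2⟩ := hN (j + N) (by omega)
      have hsubball : ∀ (Ω : Set (Eucl n × Eucl m)) (R : ℝ) (V : Set (Eucl m)),
          R ≤ max R₁ R₂ → closedBall ybar r ⊆ V →
          IsClosed (Ω ∩ {p : Eucl n × Eucl m | R ≤ ‖p.1‖ ∧ p.2 ∈ V}) →
          IsClosed (Ω ∩ closedBall (pk (j + N)) (r / 2)) := by
        intro Ω R V hRle hVsub hcl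
        have heq : Ω ∩ closedBall (pk (j + N)) (r / 2)
            = (Ω ∩ {p : Eucl n × Eucl m | R ≤ ‖p.1‖ ∧ p.2 ∈ V})
              ∩ closedBall (pk (j + N)) (r / 2) := by
          ext w
          simp only [Set.mem_inter_iff, Set.mem_setOf_eq, mem_closedBall, dist_eq_norm]
          constructor
          · rintro ⟨hwΩ, hwb⟩
            have h1 : ‖w.1 - (pk (j + N)).1‖ ≤ r / 2 := le_trans (norm_fst_le (w - pk (j + N))) hwb
            have h2 : ‖w.2 - (pk (j + N)).2‖ ≤ r / 2 := le_trans (norm_snd_le (w - pk (j + N))) hwb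
            refine ⟨⟨hwΩ, ?_, ?_⟩, hwb⟩
            · have h5 := norm_sub_norm_le ((pk (j + N)).1) w.1
              have h6 := norm_sub_rev ((pk (j + N)).1) w.1
              have h7 : R ≤ max R₁ R₂ := hRle
              linarith [le_max_left R₁ R₂, le_max_right R₁ R₂]
            · apply hVsub
              rw [mem_closedBall]
              calc dist w.2 ybar ≤ dist w.2 ((pk (j + N)).2) + dist ((pk (j + N)).2) ybar :=
                    dist_triangle _ _ _
                _ ≤ r / 2 + r / 2 := by
                    rw [dist_eq_norm]
                    exact add_le_add h2 hq2.le
                _ = r := by ring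
          · rintro ⟨⟨hwΩ, _⟩, hwb⟩
            exact ⟨hwΩ, hwb⟩
        rw [heq]
        exact hcl.inter isClosed_closedBall
      exact fuzzy Ω₁ Ω₂ (pk (j + N)) (ξk (j + N)) (r / 2) _
        (by linarith) (lt_min (by linarith) (by positivity))
        (hsubball Ω₁ R₁ V₁ (le_max_left _ _) (fun y hy => (hrsub hy).1) hcl₁)
        (hsubball Ω₂ R₂ V₂ (le_max_right _ _) (fun y hy => (hrsub hy).2) hcl₂)
        (hξkF (j + N))
    choose x₁ x₂ ξ₁ ξ₂ hd₁ hd₂ hF₁ hF₂ herr using key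
    have hone : ∀ j : ℕ, min (r / 2) (1 / ((j:ℝ) + 1)) ≤ 1 / ((j:ℝ) + 1) :=
      fun j => min_le_right _ _
    have honele : ∀ j : ℕ, (1:ℝ) / ((j:ℝ) + 1) ≤ 1 := by
      intro j
      rw [div_le_one (by positivity)]
      simp [Nat.cast_nonneg]
    -- limits of the approximating sequences
    have hpk1' : Tendsto (fun j => ‖(pk (j + N)).1‖) atTop atTop :=
      (tendsto_add_atTop_iff_nat N).2 hpk1
    have hpk2' : Tendsto (fun j => (pk (j + N)).2) atTop (𝓝 ybar) :=
      (tendsto_add_atTop_iff_nat N).2 hpk2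
    have hξklim' : Tendsto (fun j => ξk (j + N)) atTop (𝓝 ξ) :=
      (tendsto_add_atTop_iff_nat N).2 hξklim
    have hT1 : ∀ (x : ℕ → Eucl n × Eucl m), (∀ j, ‖x j - pk (j + N)‖ ≤ min (r / 2) (1 / ((j:ℝ) + 1))) →
        Tendsto (fun j => ‖(x j).1‖) atTop atTop ∧ Tendsto (fun j => (x j).2) atTop (𝓝 ybar) := by
      intro x hx
      constructor
      · apply tendsto_atTop_mono (f := fun j => ‖(pk (j + N)).1‖ + (-1))
        · intro j
          have h1 : ‖(x j).1 - (pk (j + N)).1‖ ≤ 1 :=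
            le_trans (le_trans (norm_fst_le (x j - pk (j + N))) (hx j))
              (le_trans (hone j) (honele j))
          have h5 := norm_sub_norm_le ((pk (j + N)).1) ((x j).1)
          have h6 := norm_sub_rev ((pk (j + N)).1) ((x j).1)
          linarith
        · exact tendsto_atTop_add_const_right _ _ hpk1'
      · rw [tendsto_iff_dist_tendsto_zero]
        apply squeeze_zero (fun j => dist_nonneg)
          (g := fun j : ℕ => 1 / ((j:ℝ) + 1) + dist ((pk (j + N)).2) ybar)
        · intro j
          have h2 : dist ((x j).2) ((pk (j + N)).2) ≤ 1 / ((j:ℝ) + 1) := by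
            rw [dist_eq_norm]
            exact le_trans (le_trans (norm_snd_le (x j - pk (j + N))) (hx j)) (hone j)
          calc dist ((x j).2) ybar
              ≤ dist ((x j).2) ((pk (j + N)).2) + dist ((pk (j + N)).2) ybar := dist_triangle _ _ _
            _ ≤ 1 / ((j:ℝ) + 1) + dist ((pk (j + N)).2) ybar := by linarith
        · have := tendsto_one_div_add_atTop_nhds_zero_nat.add
            (tendsto_iff_dist_tendsto_zero.1 hpk2')
          simpa using this
    obtain ⟨hT1a, hT1b⟩ := hT1 x₁ hd₁
    obtain ⟨hT2a, hT2b⟩ := hT1 x₂ hd₂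
    have hξsum : Tendsto (fun j => ξ₁ j + ξ₂ j) atTop (𝓝 ξ) := by
      have h0 : Tendsto (fun j => ξk (j + N) - ξ₁ j - ξ₂ j) atTop (𝓝 0) := by
        apply squeeze_zero_norm (fun j => le_trans (herr j) (hone j))
        exact tendsto_one_div_add_atTop_nhds_zero_nat
      have heq : (fun j => ξ₁ j + ξ₂ j)
          = fun j => ξk (j + N) - (ξk (j + N) - ξ₁ j - ξ₂ j) := by
        funext j; abel
      rw [heq]
      simpa using hξklim'.sub h0
    -- normalization
    set s : ℕ → ℝ := fun j => (max 1 ‖ξ₁ j‖)⁻¹ with hsdef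
    have hmaxpos : ∀ j, (0:ℝ) < max 1 ‖ξ₁ j‖ := fun j => lt_of_lt_of_le one_pos (le_max_left _ _)
    have hspos : ∀ j, 0 < s j := fun j => inv_pos.2 (hmaxpos j)
    have hsle1 : ∀ j, s j ≤ 1 := fun j => by
      simp only [hsdef]
      exact inv_le_one_of_one_le₀ (le_max_left _ _)
    have hsnorm : ∀ j, ‖s j • ξ₁ j‖ ≤ 1 := by
      intro j
      rw [norm_smul, Real.norm_eq_abs, abs_of_pos (hspos j)]
      calc s j * ‖ξ₁ j‖ ≤ s j * max 1 ‖ξ₁ j‖ :=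
            mul_le_mul_of_nonneg_left (le_max_right _ _) (hspos j).le
        _ = 1 := inv_mul_cancel₀ (ne_of_gt (hmaxpos j))
    have hsge : ∀ j, 1 - s j ≤ ‖s j • ξ₁ j‖ := by
      intro j
      rw [norm_smul, Real.norm_eq_abs, abs_of_pos (hspos j)]
      rcases le_total 1 ‖ξ₁ j‖ with h | h
      · have hmax : max 1 ‖ξ₁ j‖ = ‖ξ₁ j‖ := max_eq_right h
        simp only [hsdef, hmax]
        rw [inv_mul_cancel₀ (ne_of_gt (lt_of_lt_of_le one_pos h))]
        have : 0 < (‖ξ₁ j‖)⁻¹ := inv_pos.2 (lt_of_lt_of_le one_pos h)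
        linarith
      · have hmax : max 1 ‖ξ₁ j‖ = 1 := max_eq_left h
        simp only [hsdef, hmax, inv_one, one_mul]
        linarith [norm_nonneg (ξ₁ j)]
    set K : Set (ℝ × (Eucl n × Eucl m)) := Icc (0:ℝ) 1 ×ˢ closedBall 0 1 with hKdef
    have hKcomp : IsCompact K := isCompact_Icc.prod (isCompact_closedBall _ _)
    have haK : ∀ j, (s j, s j • ξ₁ j) ∈ K := fun j =>
      ⟨⟨(hspos j).le, hsle1 j⟩, mem_closedBall_zero_iff.2 (hsnorm j)⟩
    obtain ⟨⟨σ, η⟩, hσK, ψ, hψ, hψlim⟩ := hKcomp.tendsto_subseq haK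
    have hσlim : Tendsto (fun j => s (ψ j)) atTop (𝓝 σ) :=
      (continuous_fst.tendsto (σ, η)).comp hψlim
    have hηlim : Tendsto (fun j => s (ψ j) • ξ₁ (ψ j)) atTop (𝓝 η) :=
      (continuous_snd.tendsto (σ, η)).comp hψlim
    have hψat : Tendsto ψ atTop atTop := hψ.tendsto_atTop
    rcases eq_or_lt_of_le hσK.1.1 with hσ0 | hσpos
    · -- degenerate case: contradiction with transversality
      exfalso
      have hσ0' : σ = 0 := by simpa using hσ0.symm
      have hη1 : ‖η‖ = 1 := by
        have hle : ‖η‖ ≤ 1 := mem_closedBall_zero_iff.1 hσK.2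
        have hge : 1 - σ ≤ ‖η‖ := by
          refine le_of_tendsto_of_tendsto' (tendsto_const_nhds.sub hσlim) hηlim.norm
            (fun j => hsge (ψ j))
        rw [hσ0'] at hge
        linarith
      have hηN₁ : η ∈ normalConeAtInfty Ω₁ ybar := by
        refine ⟨fun j => x₁ (ψ j), fun j => s (ψ j) • ξ₁ (ψ j),
          fun j => (hF₁ (ψ j)).1, hT1a.comp hψat, hT1b.comp hψat,
          fun j => frechet_smul (hspos (ψ j)) (hF₁ (ψ j)), hηlim⟩
      have hsξ₂lim : Tendsto (fun j => s (ψ j) • ξ₂ (ψ j)) atTop (𝓝 (-η)) := by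
        have heq : (fun j => s (ψ j) • ξ₂ (ψ j))
            = fun j => s (ψ j) • (ξ₁ (ψ j) + ξ₂ (ψ j)) - s (ψ j) • ξ₁ (ψ j) := by
          funext j
          rw [smul_add]
          abel
        rw [heq]
        have h1 : Tendsto (fun j => s (ψ j) • (ξ₁ (ψ j) + ξ₂ (ψ j))) atTop (𝓝 ((0:ℝ) • ξ)) := by
          apply Tendsto.smul (hσ0' ▸ hσlim) (hξsum.comp hψat)
        rw [zero_smul] at h1
        simpa using h1.sub hηlim
      have hmηN₂ : -η ∈ normalConeAtInfty Ω₂ ybar := by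
        refine ⟨fun j => x₂ (ψ j), fun j => s (ψ j) • ξ₂ (ψ j),
          fun j => (hF₂ (ψ j)).1, hT2a.comp hψat, hT2b.comp hψat,
          fun j => frechet_smul (hspos (ψ j)) (hF₂ (ψ j)), hsξ₂lim⟩
      have hmem : η ∈ normalConeAtInfty Ω₁ ybar ∩ (-(normalConeAtInfty Ω₂ ybar)) :=
        ⟨hηN₁, Set.mem_neg.2 hmηN₂⟩
      rw [htrans, Set.mem_singleton_iff] at hmem
      rw [hmem, norm_zero] at hη1
      norm_num at hη1
    · -- nondegenerate case
      have hξ₁lim : Tendsto (fun j => ξ₁ (ψ j)) atTop (𝓝 (σ⁻¹ • η)) := by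
        have heq : (fun j => ξ₁ (ψ j))
            = fun j => (s (ψ j))⁻¹ • (s (ψ j) • ξ₁ (ψ j)) := by
          funext j
          rw [inv_smul_smul₀ (ne_of_gt (hspos (ψ j)))]
        rw [heq]
        exact (hσlim.inv₀ (ne_of_gt hσpos)).smul hηlim
      have hζ₁ : σ⁻¹ • η ∈ normalConeAtInfty Ω₁ ybar :=
        ⟨fun j => x₁ (ψ j), fun j => ξ₁ (ψ j),
          fun j => (hF₁ (ψ j)).1, hT1a.comp hψat, hT1b.comp hψat,
          fun j => hF₁ (ψ j), hξ₁lim⟩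
      have hξ₂lim : Tendsto (fun j => ξ₂ (ψ j)) atTop (𝓝 (ξ - σ⁻¹ • η)) := by
        have heq : (fun j => ξ₂ (ψ j))
            = fun j => (ξ₁ (ψ j) + ξ₂ (ψ j)) - ξ₁ (ψ j) := by
          funext j; abel
        rw [heq]
        exact (hξsum.comp hψat).sub hξ₁lim
      have hζ₂ : ξ - σ⁻¹ • η ∈ normalConeAtInfty Ω₂ ybar :=
        ⟨fun j => x₂ (ψ j), fun j => ξ₂ (ψ j),
          fun j => (hF₂ (ψ j)).1, hT2a.comp hψat, hT2b.comp hψat,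
          fun j => hF₂ (ψ j), hξ₂lim⟩
      exact Set.mem_add.2 ⟨σ⁻¹ • η, hζ₁, ξ - σ⁻¹ • η, hζ₂, by abel⟩
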